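/- For every integer n ≥ 2 and all real parameters γ, β: f_n(γ,β) < 1/(2(2n−1)); equivalently, n(2n−1)·(1/2 + f_n(γ,β)) < n², so the approximation ratio of level-1 QAOA for MAX-CUT on the complete graph K_{2n} is strictly less than 1. -/

import Mathlib

open Real

/-- The deviation from `1/2` of the per-edge expectation value of the level-1 QAOA
for MAX-CUT on the complete graph `K_{2n}`. -/
noncomputable def qaoaF (n : ℕ) (γ β : ℝ) : ℝ :=
  (1 / 2) * sin (4 * β) * sin γ * cos γ ^ (2 * n - 2)
    - (1 / 4) * sin (2 * β) ^ 2 * (1 - cos (2 * γ) ^ (2 * n - 2))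

lemma qaoa_aux_quad (m : ℕ) (x : ℝ) (h0 : 0 ≤ x) (h1 : x ≤ 1) :
    (1 - x) ^ m * (1 + m * x + m * (m - 1) / 2 * x ^ 2) ≤ 1 := by
  induction m with
  | zero => norm_num
  | succ m ih =>
      have hm : (0:ℝ) ≤ m := Nat.cast_nonneg m
      have hx : (0:ℝ) ≤ 1 - x := by linarith
      have hpow : (0:ℝ) ≤ (1 - x) ^ m := pow_nonneg hx m
      have step : (1 - x) * (1 + (m+1 : ℕ) * x + (m+1 : ℕ) * ((m+1 : ℕ) - 1) / 2 * x ^ 2)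
          ≤ 1 + m * x + m * (m - 1) / 2 * x ^ 2 := by
        push_cast
        nlinarith [sq_nonneg x, mul_nonneg (mul_nonneg hm h0) (mul_nonneg h0 h0)]
      calc (1 - x) ^ (m+1) * (1 + (m+1:ℕ) * x + (m+1:ℕ) * ((m+1:ℕ) - 1) / 2 * x ^ 2)
          = (1 - x) ^ m * ((1 - x) * (1 + (m+1:ℕ) * x + (m+1:ℕ) * ((m+1:ℕ) - 1) / 2 * x ^ 2)) := by
            ring
        _ ≤ (1 - x) ^ m * (1 + m * x + m * (m - 1) / 2 * x ^ 2) :=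
            mul_le_mul_of_nonneg_left step hpow
        _ ≤ 1 := ih

lemma qaoa_aux_cubic (m : ℕ) (y : ℝ) (h0 : 0 ≤ y) (h1 : y ≤ 1) :
    (1 - y) ^ m * (1 + m * y + m * (m - 1) / 2 * y ^ 2 + m * (m - 1) * (m - 2) / 6 * y ^ 3) ≤ 1 := by
  induction m with
  | zero => norm_num
  | succ m ih =>
      have hm : (0:ℝ) ≤ m := Nat.cast_nonneg m
      have hx : (0:ℝ) ≤ 1 - y := by linarith
      have hpow : (0:ℝ) ≤ (1 - y) ^ m := pow_nonneg hx m
      have hmm1 : (0:ℝ) ≤ (m:ℝ) * ((m:ℝ) - 1) := by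
        rcases Nat.eq_zero_or_pos m with h | h
        · simp [h]
        · have : (1:ℝ) ≤ m := by exact_mod_cast h
          nlinarith
      have step : (1 - y) * (1 + ((m:ℝ)+1) * y + ((m:ℝ)+1) * (((m:ℝ)+1) - 1) / 2 * y ^ 2
            + ((m:ℝ)+1) * (((m:ℝ)+1) - 1) * (((m:ℝ)+1) - 2) / 6 * y ^ 3)
          ≤ 1 + m * y + m * (m - 1) / 2 * y ^ 2 + m * (m - 1) * (m - 2) / 6 * y ^ 3 := by
        nlinarith [sq_nonneg y, mul_nonneg (mul_nonneg hm h0) (mul_nonneg h0 h0),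
          mul_nonneg (mul_nonneg (mul_nonneg hmm1 h0) (mul_nonneg h0 h0)) h0,
          mul_nonneg (mul_nonneg hmm1 h0) (mul_nonneg h0 h0)]
      calc (1 - y) ^ (m+1) * (1 + ((m:ℕ)+1:ℕ) * y + ((m:ℕ)+1:ℕ) * (((m:ℕ)+1:ℕ) - 1) / 2 * y ^ 2
            + ((m:ℕ)+1:ℕ) * (((m:ℕ)+1:ℕ) - 1) * (((m:ℕ)+1:ℕ) - 2) / 6 * y ^ 3)
          = (1 - y) ^ m * ((1 - y) * (1 + ((m:ℝ)+1) * y + ((m:ℝ)+1) * (((m:ℝ)+1) - 1) / 2 * y ^ 2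
            + ((m:ℝ)+1) * (((m:ℝ)+1) - 1) * (((m:ℝ)+1) - 2) / 6 * y ^ 3)) := by
            push_cast; ring
        _ ≤ (1 - y) ^ m * (1 + m * y + m * (m - 1) / 2 * y ^ 2
              + m * (m - 1) * (m - 2) / 6 * y ^ 3) :=
            mul_le_mul_of_nonneg_left step hpow
        _ ≤ 1 := ih

lemma qaoa_aux_D (m x : ℝ) (hm : 2 ≤ m) (hx0 : 0 ≤ x) (hx2 : x ≤ 1/2) :
    2*(m+1)^2*x*(1+2*m*x+2*m*(m-1)*x^2+4*m*(m-1)*(m-2)/3*x^3)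
    < (m+1)*(2*m*x+2*m*(m-1)*x^2+4*m*(m-1)*(m-2)/3*x^3)*(1+m*x+m*(m-1)/2*x^2)
      + 2*(1+m*x+m*(m-1)/2*x^2)*(1+2*m*x+2*m*(m-1)*x^2+4*m*(m-1)*(m-2)/3*x^3) := by
  have hm0 : (0:ℝ) ≤ m := by linarith
  have hm2 : (0:ℝ) ≤ m - 2 := by linarith
  have hx1 : (0:ℝ) ≤ 1 - 2*x := by linarith
  rcases le_total (m*x) 1 with hs | hs
  · have h1 : (0:ℝ) ≤ 1 - m*x := by linarith
    nlinarith [mul_nonneg (mul_nonneg (mul_nonneg (pow_nonneg hm0 4) (pow_nonneg hx0 3)) h1) h1,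
      mul_nonneg (mul_nonneg (pow_nonneg hm0 4) (pow_nonneg hx0 3)) h1,
      mul_nonneg (mul_nonneg (pow_nonneg hm0 2) (pow_nonneg hx0 2)) h1,
      mul_nonneg (mul_nonneg (pow_nonneg hm0 3) (pow_nonneg hx0 3)) h1,
      mul_nonneg (mul_nonneg hm0 hx0) h1,
      mul_nonneg (mul_nonneg (mul_nonneg hm0 (pow_nonneg hx0 2)) h1) hx1,
      mul_nonneg (mul_nonneg (mul_nonneg (pow_nonneg hm0 2) (pow_nonneg hx0 3)) h1) hx1,
      mul_nonneg (mul_nonneg hm0 (pow_nonneg hx0 2)) hm2,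
      mul_nonneg (mul_nonneg (pow_nonneg hm0 2) (pow_nonneg hx0 3)) hm2,
      mul_nonneg (mul_nonneg (pow_nonneg hm0 3) (pow_nonneg hx0 4)) hm2,
      mul_nonneg (mul_nonneg (pow_nonneg hm0 4) (pow_nonneg hx0 5)) hm2,
      mul_nonneg hx0 hx1, mul_nonneg (mul_nonneg hm0 hx0) hx1]
  · have h1 : (0:ℝ) ≤ m*x - 1 := by linarith
    nlinarith [mul_nonneg (mul_nonneg (mul_nonneg (pow_nonneg hm0 5) (pow_nonneg hx0 4)) h1) h1,
      mul_nonneg (mul_nonneg (pow_nonneg hm0 5) (pow_nonneg hx0 4)) h1,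
      mul_nonneg (mul_nonneg (pow_nonneg hm0 3) (pow_nonneg hx0 3)) h1,
      mul_nonneg (mul_nonneg (pow_nonneg hm0 2) (pow_nonneg hx0 2)) h1,
      mul_nonneg (mul_nonneg (pow_nonneg hm0 4) (pow_nonneg hx0 4)) hm2,
      mul_nonneg (mul_nonneg (pow_nonneg hm0 3) (pow_nonneg hx0 4)) hm2,
      mul_nonneg (mul_nonneg (pow_nonneg hm0 5) (pow_nonneg hx0 5)) hm2,
      mul_nonneg (mul_nonneg (mul_nonneg (pow_nonneg hm0 4) (pow_nonneg hx0 4)) h1) hx1,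
      mul_nonneg (mul_nonneg (mul_nonneg (pow_nonneg hm0 3) (pow_nonneg hx0 3)) h1) hx1,
      mul_nonneg (mul_nonneg hm0 hx0) h1,
      mul_nonneg hx0 hx1, mul_nonneg (mul_nonneg (pow_nonneg hm0 4) (pow_nonneg hx0 5)) hm2]

lemma qaoa_aux_pow2 (j : ℕ) (hj : 2 ≤ j) : j + 3 ≤ 2 ^ (j + 1) := by
  induction j with
  | zero => omega
  | succ j ih =>
      rcases Nat.lt_or_ge j 2 with h | h
      · interval_cases j <;> norm_num
      · have h2 := ih h
        calc j + 1 + 3 ≤ 2 * (j + 3) := by omega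
          _ ≤ 2 * 2 ^ (j+1) := by omega
          _ = 2 ^ (j+1+1) := by ring

set_option maxHeartbeats 1600000 in
lemma qaoa_key (m : ℕ) (hm2 : 2 ≤ m) (hme : Even m) (x : ℝ) (h0 : 0 ≤ x) (h1 : x ≤ 1) :
    2 * ((m:ℝ)+1)^2 * (x * (1-x)^m) < ((m:ℝ)+1) * (1 - (1-2*x)^m) + 2 := by
  have hM : (2:ℝ) ≤ (m:ℝ) := by exact_mod_cast hm2
  have hM0 : (0:ℝ) ≤ (m:ℝ) := by linarith
  have hMM1 : (0:ℝ) ≤ (m:ℝ) * ((m:ℝ)-1) := by nlinarith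
  have hMM2 : (0:ℝ) ≤ (m:ℝ) * ((m:ℝ)-1) * ((m:ℝ)-2) := by nlinarith
  rcases le_total x (1/2) with hxh | hxh
  · have hd1 : (0:ℝ) < 1 + (m:ℝ)*x + (m:ℝ)*((m:ℝ)-1)/2*x^2 := by
      nlinarith [mul_nonneg hM0 h0, mul_nonneg hMM1 (sq_nonneg x)]
    have hu : (0:ℝ) < 1 + 2*(m:ℝ)*x + 2*(m:ℝ)*((m:ℝ)-1)*x^2
        + 4*(m:ℝ)*((m:ℝ)-1)*((m:ℝ)-2)/3*x^3 := by
      nlinarith [mul_nonneg hM0 h0, mul_nonneg hMM1 (sq_nonneg x),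
        mul_nonneg hMM2 (pow_nonneg h0 3)]
    have q : (1-x)^m * (1 + (m:ℝ)*x + (m:ℝ)*((m:ℝ)-1)/2*x^2) ≤ 1 := qaoa_aux_quad m x h0 h1
    have c : (1-2*x)^m * (1 + 2*(m:ℝ)*x + 2*(m:ℝ)*((m:ℝ)-1)*x^2
        + 4*(m:ℝ)*((m:ℝ)-1)*((m:ℝ)-2)/3*x^3) ≤ 1 := by
      have hc := qaoa_aux_cubic m (2*x) (by linarith) (by linarith)
      calc (1-2*x)^m * (1 + 2*(m:ℝ)*x + 2*(m:ℝ)*((m:ℝ)-1)*x^2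
            + 4*(m:ℝ)*((m:ℝ)-1)*((m:ℝ)-2)/3*x^3)
          = (1-2*x)^m * (1 + (m:ℝ)*(2*x) + (m:ℝ)*((m:ℝ)-1)/2*(2*x)^2
            + (m:ℝ)*((m:ℝ)-1)*((m:ℝ)-2)/6*(2*x)^3) := by ring
        _ ≤ 1 := hc
    have hD := qaoa_aux_D (m:ℝ) x hM h0 hxh
    have hxpow : (0:ℝ) ≤ (1-x)^m := pow_nonneg (by linarith) m
    have hnn : (0:ℝ) ≤ 2*((m:ℝ)+1)^2*x*(1 + 2*(m:ℝ)*x + 2*(m:ℝ)*((m:ℝ)-1)*x^2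
        + 4*(m:ℝ)*((m:ℝ)-1)*((m:ℝ)-2)/3*x^3) :=
      mul_nonneg (by positivity) (le_of_lt hu)
    have hq' := mul_le_mul_of_nonneg_left q hnn
    have inner : (1 + 2*(m:ℝ)*x + 2*(m:ℝ)*((m:ℝ)-1)*x^2
          + 4*(m:ℝ)*((m:ℝ)-1)*((m:ℝ)-2)/3*x^3) - 1
        ≤ (1 - (1-2*x)^m) * (1 + 2*(m:ℝ)*x + 2*(m:ℝ)*((m:ℝ)-1)*x^2
          + 4*(m:ℝ)*((m:ℝ)-1)*((m:ℝ)-2)/3*x^3) := by nlinarith [c]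
    have hkd1 : (0:ℝ) ≤ ((m:ℝ)+1)*(1 + (m:ℝ)*x + (m:ℝ)*((m:ℝ)-1)/2*x^2) :=
      mul_nonneg (by linarith) (le_of_lt hd1)
    have hinner' := mul_le_mul_of_nonneg_left inner hkd1
    have big : 2*((m:ℝ)+1)^2*(x*(1-x)^m)
          * ((1 + (m:ℝ)*x + (m:ℝ)*((m:ℝ)-1)/2*x^2) * (1 + 2*(m:ℝ)*x + 2*(m:ℝ)*((m:ℝ)-1)*x^2
            + 4*(m:ℝ)*((m:ℝ)-1)*((m:ℝ)-2)/3*x^3))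
        < (((m:ℝ)+1) * (1 - (1-2*x)^m) + 2)
          * ((1 + (m:ℝ)*x + (m:ℝ)*((m:ℝ)-1)/2*x^2) * (1 + 2*(m:ℝ)*x + 2*(m:ℝ)*((m:ℝ)-1)*x^2
            + 4*(m:ℝ)*((m:ℝ)-1)*((m:ℝ)-2)/3*x^3)) := by
      linarith [hq', hD, hinner']
    exact lt_of_mul_lt_mul_right big (le_of_lt (mul_pos hd1 hu))
  · obtain ⟨j, rfl⟩ : ∃ j, m = j + 2 := ⟨m - 2, by omega⟩
    have ht0 : (0:ℝ) ≤ 2*x - 1 := by linarith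
    have ht1 : (2:ℝ)*x - 1 ≤ 1 := by linarith
    have hPeq : (1-2*x)^(j+2) = (2*x-1)^(j+2) := by
      rw [show (1:ℝ)-2*x = -(2*x-1) by ring]
      exact hme.neg_pow _
    have hP : (1-2*x)^(j+2) ≤ 2*x - 1 := by
      rw [hPeq]
      exact pow_le_of_le_one ht0 ht1 (by omega)
    have hxm : (0:ℝ) ≤ 1 - x := by linarith
    have hApow : (1-x)^(j+1) ≤ (1/2:ℝ)^(j+1) := pow_le_pow_left₀ hxm (by linarith) (j+1)
    have hA : x*(1-x)^(j+2) ≤ (1-x)*(1/2:ℝ)^(j+1) := by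
      have e1 : x*(1-x)^(j+2) ≤ (1-x)^(j+2) := by
        have h := pow_nonneg hxm (j+2)
        nlinarith
      have e3 : (1-x)*(1-x)^(j+1) ≤ (1-x)*(1/2:ℝ)^(j+1) :=
        mul_le_mul_of_nonneg_left hApow hxm
      calc x*(1-x)^(j+2) ≤ (1-x)^(j+2) := e1
        _ = (1-x)*(1-x)^(j+1) := by ring
        _ ≤ (1-x)*(1/2:ℝ)^(j+1) := e3
    have hMj : ((j+2:ℕ):ℝ) = (j:ℝ) + 2 := by push_cast; ring
    obtain ⟨t, ht⟩ := hme
    have hj02 : j = 0 ∨ 2 ≤ j := by omega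
    rw [hMj]
    rcases hj02 with hj | hj
    · subst hj
      norm_num at hA ⊢
      nlinarith [hA, hxm, mul_nonneg hxm (show (0:ℝ) ≤ x - 1/2 by linarith)]
    · have hn2 : ((j:ℝ) + 3) ≤ 2^(j+1) := by exact_mod_cast qaoa_aux_pow2 j hj
      have h2p : (0:ℝ) < 2^(j+1) := by positivity
      have hkc : ((j:ℝ)+2+1) * (1/2:ℝ)^(j+1) ≤ 1 := by
        rw [one_div, inv_pow, ← div_eq_mul_inv, div_le_one h2p]
        linarith
      have hj0 : (0:ℝ) ≤ (j:ℝ) := Nat.cast_nonneg j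
      have hcpos : (0:ℝ) ≤ (1/2:ℝ)^(j+1) := by positivity
      have s1 : 2*((j:ℝ)+2+1)^2*(x*(1-x)^(j+2)) ≤ 2*((j:ℝ)+2+1)^2*((1-x)*(1/2:ℝ)^(j+1)) :=
        mul_le_mul_of_nonneg_left hA (by positivity)
      have s2 : 2*((j:ℝ)+2+1)^2*((1-x)*(1/2:ℝ)^(j+1)) ≤ 2*((j:ℝ)+2+1)*(1-x) := by
        have h := mul_le_mul_of_nonneg_left hkc
          (show (0:ℝ) ≤ 2*((j:ℝ)+2+1)*(1-x) by positivity)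
        nlinarith [h]
      have s3 : 2*((j:ℝ)+2+1)*(1-x) ≤ ((j:ℝ)+2+1)*(1-(1-2*x)^(j+2)) := by
        have h := mul_le_mul_of_nonneg_left hP (show (0:ℝ) ≤ (j:ℝ)+2+1 by positivity)
        nlinarith [h]
      linarith [s1, s2, s3]

/-- Per-edge bound for parameters of even degree `m ≥ 2`. -/
lemma qaoa_edge (m : ℕ) (hm2 : 2 ≤ m) (hme : Even m) (γ β : ℝ) :
    (1/2) * sin (4*β) * sin γ * cos γ ^ m - (1/4) * sin (2*β)^2 * (1 - cos (2*γ) ^ m)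
      < 1 / (2*((m:ℝ)+1)) := by
  have hk0 : (0:ℝ) < (m:ℝ) + 1 := by positivity
  have hx0 : (0:ℝ) ≤ sin γ ^ 2 := sq_nonneg _
  have hx1 : sin γ ^ 2 ≤ 1 := sin_sq_le_one γ
  have hcossq : cos γ ^ 2 = 1 - sin γ ^ 2 := cos_sq' γ
  have hcos2 : cos (2*γ) = 1 - 2 * sin γ ^ 2 := by
    rw [cos_two_mul', hcossq]; ring
  have hA2 : (sin γ * cos γ ^ m)^2 = sin γ ^ 2 * (1 - sin γ ^ 2)^m := by
    rw [mul_pow, ← hcossq, ← pow_mul, mul_comm m 2, pow_mul]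
  have hB0 : (0:ℝ) ≤ 1 - cos (2*γ) ^ m := by
    have h1 : cos (2*γ) ^ m ≤ |cos (2*γ) ^ m| := le_abs_self _
    have h2 : |cos (2*γ) ^ m| = |cos (2*γ)| ^ m := abs_pow _ _
    have h3 : |cos (2*γ)| ^ m ≤ 1 := pow_le_one₀ (abs_nonneg _) (abs_cos_le_one _)
    calc (0:ℝ) ≤ 1 - |cos (2*γ)| ^ m := by linarith
      _ ≤ 1 - cos (2*γ) ^ m := by rw [← h2]; linarith
  have hkey : 2 * ((m:ℝ)+1)^2 * (sin γ * cos γ ^ m)^2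
      < ((m:ℝ)+1) * (1 - cos (2*γ) ^ m) + 2 := by
    rw [hA2, hcos2]
    exact qaoa_key m hm2 hme (sin γ ^ 2) hx0 hx1
  set A : ℝ := sin γ * cos γ ^ m with hAdef
  set B : ℝ := 1 - cos (2*γ) ^ m with hBdef
  have hc4 : cos (4*β) = 1 - 2 * sin (2*β)^2 := by
    rw [show (4:ℝ)*β = 2*(2*β) by ring, cos_two_mul', cos_sq']
    ring
  have hF : (1/2) * sin (4*β) * sin γ * cos γ ^ m - (1/4) * sin (2*β)^2 * B
      = A/2 * sin (4*β) + B/8 * cos (4*β) - B/8 := by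
    rw [hc4, hAdef]; ring
  rw [hF]
  have hsc := sin_sq_add_cos_sq (4*β)
  have hcs : A/2 * sin (4*β) + B/8 * cos (4*β) ≤ Real.sqrt ((A/2)^2 + (B/8)^2) := by
    have hsq : (A/2 * sin (4*β) + B/8 * cos (4*β))^2 ≤ (A/2)^2 + (B/8)^2 := by
      nlinarith [sq_nonneg (A/2 * cos (4*β) - B/8 * sin (4*β)), hsc]
    calc A/2 * sin (4*β) + B/8 * cos (4*β) ≤ |A/2 * sin (4*β) + B/8 * cos (4*β)| :=
          le_abs_self _
      _ = Real.sqrt ((A/2 * sin (4*β) + B/8 * cos (4*β))^2) := (Real.sqrt_sq_eq_abs _).symm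
      _ ≤ Real.sqrt ((A/2)^2 + (B/8)^2) := Real.sqrt_le_sqrt hsq
  have hrhs : (0:ℝ) < B/8 + 1/(2*((m:ℝ)+1)) := by
    have : (0:ℝ) < 1/(2*((m:ℝ)+1)) := by positivity
    linarith
  have hsqrt : Real.sqrt ((A/2)^2 + (B/8)^2) < B/8 + 1/(2*((m:ℝ)+1)) := by
    rw [Real.sqrt_lt' hrhs]
    have expand : (B/8 + 1/(2*((m:ℝ)+1)))^2 - ((A/2)^2 + (B/8)^2)
        = (((m:ℝ)+1)*B + 2 - 2*((m:ℝ)+1)^2*A^2) / (8*((m:ℝ)+1)^2) := by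
      field_simp
      ring
    have hnum : (0:ℝ) < ((m:ℝ)+1)*B + 2 - 2*((m:ℝ)+1)^2*A^2 := by linarith [hkey]
    have hden : (0:ℝ) < 8*((m:ℝ)+1)^2 := by positivity
    have hq := div_pos hnum hden
    linarith [expand ▸ hq]
  linarith [hcs, hsqrt]

/-- For every `n ≥ 2` and all real `γ, β`: `f_n(γ,β) < 1/(2(2n-1))`; equivalently,
`n(2n-1)·(1/2 + f_n(γ,β)) < n²`, so the approximation ratio of level-1 QAOA for
MAX-CUT on `K_{2n}` is strictly less than `1`. -/
theorem qaoa_ratio_lt_one (n : ℕ) (hn : 2 ≤ n) (γ β : ℝ) :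
    qaoaF n γ β < 1 / (2 * (2 * (n : ℝ) - 1)) ∧
      (n : ℝ) * (2 * (n : ℝ) - 1) * (1 / 2 + qaoaF n γ β) < (n : ℝ) ^ 2 := by
  have hm2 : 2 ≤ 2*n - 2 := by omega
  have hme : Even (2*n - 2) := ⟨n - 1, by omega⟩
  have hn2 : (2:ℝ) ≤ (n:ℝ) := by exact_mod_cast hn
  have hcast : ((2*n - 2 : ℕ):ℝ) = 2*(n:ℝ) - 2 := by
    have h2n : (2:ℕ) ≤ 2*n := by omega
    push_cast [Nat.cast_sub h2n]
    ring
  have hedge := qaoa_edge (2*n - 2) hm2 hme γ β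
  rw [hcast] at hedge
  have hFeq : qaoaF n γ β
      = (1/2) * sin (4*β) * sin γ * cos γ ^ (2*n-2)
        - (1/4) * sin (2*β)^2 * (1 - cos (2*γ) ^ (2*n-2)) := rfl
  have first : qaoaF n γ β < 1 / (2 * (2 * (n : ℝ) - 1)) := by
    rw [hFeq]
    calc (1/2) * sin (4*β) * sin γ * cos γ ^ (2*n-2)
          - (1/4) * sin (2*β)^2 * (1 - cos (2*γ) ^ (2*n-2))
        < 1 / (2*((2*(n:ℝ) - 2)+1)) := hedge
      _ = 1 / (2 * (2 * (n:ℝ) - 1)) := by ring_nf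
  refine ⟨first, ?_⟩
  have hk0 : (0:ℝ) < 2*(n:ℝ) - 1 := by linarith
  have hmul : (n:ℝ) * (2*(n:ℝ)-1) * (1/2 + 1/(2*(2*(n:ℝ)-1))) = (n:ℝ)^2 := by
    have h := mul_inv_cancel₀ hk0.ne'
    rw [one_div (2*(2*(n:ℝ)-1)), mul_inv]
    linear_combination (n:ℝ)/2 * h
  have hpos : (0:ℝ) < (n:ℝ) * (2*(n:ℝ)-1) := by nlinarith
  have hlt : (n:ℝ) * (2*(n:ℝ)-1) * (1/2 + qaoaF n γ β)
      < (n:ℝ) * (2*(n:ℝ)-1) * (1/2 + 1/(2*(2*(n:ℝ)-1))) := by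
    apply mul_lt_mul_of_pos_left _ hpos
    linarith [first]
  linarith [hmul ▸ hlt]
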